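/- Let A[1..n] be an array with no consecutive equal elements, and for each i in {1,...,n-1} let k_i be the number of 1s strictly between positions f(i,T) and f(i+1,T) in BP(T), where T ∈ {Min(A), Max(A)} is the tree that is NOT the relevant tree of node i. Then k_i ≥ 1 for all i, and the total length of the concatenation S = s_1 s_2 ... s_{n-1}, where s_i = 1^{k_i - 1} 0, is at most 2(n-1); in particular S contains exactly n-1 zeros and at most n-1 ones. -/

import Mathlib

def psv (A : ℕ → ℤ) (i : ℕ) : ℕ := Nat.findGreatest (fun j => A j < A i) (i - 1)

def plv (A : ℕ → ℤ) (i : ℕ) : ℕ := Nat.findGreatest (fun j => A i < A j) (i - 1)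

def internalMin (A : ℕ → ℤ) (n i : ℕ) : Prop := ∃ j, 1 ≤ j ∧ j ≤ n ∧ psv A j = i

def internalMax (A : ℕ → ℤ) (n i : ℕ) : Prop := ∃ j, 1 ≤ j ∧ j ≤ n ∧ plv A j = i

def leafMin (A : ℕ → ℤ) (n i : ℕ) : Prop := ¬ internalMin A n i

def leafMax (A : ℕ → ℤ) (n i : ℕ) : Prop := ¬ internalMax A n i

def NoConsecEq (A : ℕ → ℤ) (n : ℕ) : Prop := ∀ i, 1 ≤ i → i < n → A i ≠ A (i + 1)

def isLeftmostChildMin (A : ℕ → ℤ) (n c : ℕ) : Prop :=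
  1 ≤ c ∧ c ≤ n ∧ ∀ j, 1 ≤ j → j ≤ n → psv A j = psv A c → c ≤ j

def isLeftmostChildMax (A : ℕ → ℤ) (n c : ℕ) : Prop :=
  1 ≤ c ∧ c ≤ n ∧ ∀ j, 1 ≤ j → j ≤ n → plv A j = plv A c → c ≤ j

def immLeftSibMin (A : ℕ → ℤ) (n j i : ℕ) : Prop :=
  1 ≤ j ∧ j < i ∧ i ≤ n ∧ psv A j = psv A i ∧ ∀ k, j < k → k < i → psv A k ≠ psv A i

def immLeftSibMax (A : ℕ → ℤ) (n j i : ℕ) : Prop :=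
  1 ≤ j ∧ j < i ∧ i ≤ n ∧ plv A j = plv A i ∧ ∀ k, j < k → k < i → plv A k ≠ plv A i

def redMin (A : ℕ → ℤ) (n i : ℕ) : Prop := ∃ j, immLeftSibMin A n j i ∧ A j ≠ A i

def redMax (A : ℕ → ℤ) (n i : ℕ) : Prop := ∃ j, immLeftSibMax A n j i ∧ A j ≠ A i

def validMin (A : ℕ → ℤ) (n i : ℕ) : Prop :=
  1 ≤ i ∧ i ≤ n ∧ ¬ isLeftmostChildMin A n i ∧ ¬ ∃ j, immLeftSibMin A n j i ∧ leafMin A n j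

def validMax (A : ℕ → ℤ) (n i : ℕ) : Prop :=
  1 ≤ i ∧ i ≤ n ∧ ¬ isLeftmostChildMax A n i ∧ ¬ ∃ j, immLeftSibMax A n j i ∧ leafMax A n j

inductive LTree where
  | node : ℕ → List LTree → LTree

mutual
def bpt : LTree → List (Bool × ℕ)
  | .node l cs => (false, l) :: bptL cs ++ [(true, l)]
def bptL : List LTree → List (Bool × ℕ)
  | [] => []
  | t :: ts => bpt t ++ bptL ts
end

def bpSeq (t : LTree) : List Bool := (bpt t).map Prod.fst

def fpos (t : LTree) (i : ℕ) : ℕ := (bpt t).idxOf (false, i) + 1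

def childList (P : ℕ → ℕ) (n i : ℕ) : List ℕ :=
  (List.range (n + 1)).filter (fun j => decide (1 ≤ j ∧ P j = i ∧ i < j))

def buildTree (P : ℕ → ℕ) (n : ℕ) : ℕ → ℕ → LTree
  | 0, i => .node i []
  | fuel + 1, i => .node i ((childList P n i).map (buildTree P n fuel))

def minTree (A : ℕ → ℤ) (n : ℕ) : LTree := buildTree (psv A) n (n + 1) 0

def maxTree (A : ℕ → ℤ) (n : ℕ) : LTree := buildTree (plv A) n (n + 1) 0

/-- number of `1`s (true bits) strictly between 1-indexed positions `a` and `b` of `B`. -/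
def onesBetween (B : List Bool) (a b : ℕ) : ℕ :=
  ((List.range B.length).filter (fun p => decide (a < p + 1 ∧ p + 1 < b) && B.getD p false)).length

namespace BPaux

lemma bpt_node (l cs) : bpt (.node l cs) = (false, l) :: bptL cs ++ [(true, l)] := by rw [bpt]
@[simp] lemma bptL_nil : bptL [] = [] := by rw [bptL]
@[simp] lemma bptL_cons (t ts) : bptL (t :: ts) = bpt t ++ bptL ts := by rw [bptL]

lemma buildTree_succ (P n fuel i) :
    buildTree P n (fuel+1) i = .node i ((childList P n i).map (buildTree P n fuel)) := rfl

/-- labels of opening parens, in order -/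
def opens (M : List (Bool × ℕ)) : List ℕ :=
  M.filterMap (fun x => if x.1 then none else some x.2)

@[simp] lemma opens_nil : opens [] = [] := rfl
@[simp] lemma opens_cons_true (l : ℕ) (M) : opens ((true, l) :: M) = opens M := rfl
@[simp] lemma opens_cons_false (l : ℕ) (M) : opens ((false, l) :: M) = l :: opens M := rfl
@[simp] lemma opens_append (M N) : opens (M ++ N) = opens M ++ opens N :=
  List.filterMap_append

lemma length_opens (M) : (opens M).length = M.countP (fun x => !x.1) := by
  induction M with
  | nil => rfl
  | cons x M ih =>
    obtain ⟨b, l⟩ := x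
    cases b <;>
      simp only [opens, List.countP_cons, List.filterMap_cons] at ih ⊢ <;>
      simp [ih]

lemma count_false_opens (M) (l : ℕ) : M.count (false, l) = (opens M).count l := by
  induction M with
  | nil => rfl
  | cons x M ih =>
    obtain ⟨b, m⟩ := x
    cases b
    · rcases eq_or_ne m l with rfl | hne
      · simp [List.count_cons, ih]
      · simp [List.count_cons, ih, hne, Prod.ext_iff]
    · simp [List.count_cons, ih]

/-- first index strictly past `i` that exits the subtree of `i` -/
lemma ebnd_ex (P : ℕ → ℕ) (n i : ℕ) : ∃ e, i < e ∧ (n < e ∨ P e < i) :=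
  ⟨max (n+1) (i+1), lt_max_of_lt_right (Nat.lt_succ_self i),
    Or.inl (lt_max_of_lt_left (Nat.lt_succ_self n))⟩

def Ebnd (P : ℕ → ℕ) (n i : ℕ) : ℕ := Nat.find (ebnd_ex P n i)

lemma Ebnd_spec (P n i) : i < Ebnd P n i ∧ (n < Ebnd P n i ∨ P (Ebnd P n i) < i) :=
  Nat.find_spec (ebnd_ex P n i)

lemma Ebnd_min {P n i m} (h : i < m) (h2 : n < m ∨ P m < i) : Ebnd P n i ≤ m :=
  Nat.find_le ⟨h, h2⟩

lemma Ebnd_le (P) {n i} (h : i ≤ n) : Ebnd P n i ≤ n + 1 :=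
  Ebnd_min (by omega) (Or.inl (by omega))

lemma Ebnd_mid {P n i m} (h1 : i < m) (h2 : m < Ebnd P n i) : m ≤ n ∧ i ≤ P m := by
  have := Nat.find_min (ebnd_ex P n i) h2
  simp only [not_and, not_or, not_lt] at this
  exact this h1

lemma Ebnd_zero (P) {n : ℕ} : Ebnd P n 0 = n + 1 := by
  have h1 := Ebnd_le P (Nat.zero_le n)
  have h2 := (Ebnd_spec P n 0).2
  rcases h2 with h2 | h2
  · omega
  · omega

section Tree

variable {P : ℕ → ℕ} {n : ℕ}
variable (hP1 : ∀ j, 1 ≤ j → j ≤ n → P j < j)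
variable (hP2 : ∀ j m, 1 ≤ j → j ≤ n → P j < m → m < j → P j ≤ P m)

include hP1 hP2

lemma child_lt_Ebnd {i j : ℕ} (hij : i < j) (hjn : j ≤ n) (hPj : P j = i) :
    j < Ebnd P n i := by
  by_contra hc
  push_neg at hc
  have hspec := (Ebnd_spec P n i).2
  have hE1 := (Ebnd_spec P n i).1
  rcases hspec with h | h
  · omega
  · rcases eq_or_lt_of_le hc with heq | hlt
    · rw [← heq] at hPj; omega
    · have := hP2 j (Ebnd P n i) (by omega) hjn (by omega) hlt
      omega

lemma childList_eq {i : ℕ} (hi : i ≤ n) :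
    childList P n i = (List.Ico (i+1) (Ebnd P n i)).filter (fun j => decide (P j = i)) := by
  have hE1 : i + 1 ≤ Ebnd P n i := (Ebnd_spec P n i).1
  have hE2 : Ebnd P n i ≤ n + 1 := Ebnd_le P hi
  have hsplit : List.range (n+1) =
      List.Ico 0 (i+1) ++ List.Ico (i+1) (Ebnd P n i) ++ List.Ico (Ebnd P n i) (n+1) := by
    rw [List.append_assoc, List.Ico.append_consecutive hE1 hE2,
      List.Ico.append_consecutive (by omega) (by omega), List.Ico.zero_bot]
  rw [childList, hsplit, List.filter_append, List.filter_append]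
  have h1 : (List.Ico 0 (i+1)).filter (fun j => decide (1 ≤ j ∧ P j = i ∧ i < j)) = [] := by
    rw [List.filter_eq_nil_iff]
    intro a ha
    rw [List.Ico.mem] at ha
    simp only [decide_eq_true_eq, not_and]
    omega
  have h3 : (List.Ico (Ebnd P n i) (n+1)).filter (fun j => decide (1 ≤ j ∧ P j = i ∧ i < j)) = [] := by
    rw [List.filter_eq_nil_iff]
    intro a ha
    rw [List.Ico.mem] at ha
    simp only [decide_eq_true_eq, not_and]
    intro _ hP hlt
    have := child_lt_Ebnd hP1 hP2 hlt (by omega) hP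
    omega
  rw [h1, h3, List.nil_append, List.append_nil]
  apply List.filter_congr
  intro x hx
  rw [List.Ico.mem] at hx
  simp only [decide_eq_decide]
  constructor
  · exact fun h => h.2.1
  · exact fun h => ⟨by omega, h, by omega⟩

end Tree

section Tree2

variable {P : ℕ → ℕ} {n : ℕ}
variable (hP1 : ∀ j, 1 ≤ j → j ≤ n → P j < j)
variable (hP2 : ∀ j m, 1 ≤ j → j ≤ n → P j < m → m < j → P j ≤ P m)

lemma Ico_cons {a b : ℕ} (h : a < b) : List.Ico a b = a :: List.Ico (a+1) b := by
  rw [← List.Ico.append_consecutive (Nat.le_succ a) h, List.Ico.succ_singleton]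
  rfl

lemma inf_l {α} {X A : List α} (B : List α) (h : X <:+: A) : X <:+: A ++ B :=
  h.trans ⟨[], B, by simp⟩

lemma inf_r {α} {X B : List α} (A : List α) (h : X <:+: B) : X <:+: A ++ B :=
  h.trans ⟨A, [], by simp⟩

include hP1 hP2

theorem main_struct : ∀ fuel i, i ≤ n → n + 1 - i ≤ fuel →
    opens (bpt (buildTree P n fuel i)) = List.Ico i (Ebnd P n i) ∧
    (∀ l, l ∈ List.Ico i (Ebnd P n i) → childList P n l = [] →
      [(false,l),(true,l)] <:+: bpt (buildTree P n fuel i)) := by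
  intro fuel
  induction fuel with
  | zero => intro i hi hf; omega
  | succ fuel IH =>
    intro i hi hf
    have hE1 : i < Ebnd P n i := (Ebnd_spec P n i).1
    have hE2 : Ebnd P n i ≤ n + 1 := Ebnd_le P hi
    have inner : ∀ d a, Ebnd P n i - a ≤ d → i < a → a ≤ Ebnd P n i →
        (a = Ebnd P n i ∨ P a = i) →
        opens (bptL (((List.Ico a (Ebnd P n i)).filter (fun j => decide (P j = i))).map
          (buildTree P n fuel))) = List.Ico a (Ebnd P n i) ∧
        (∀ l, l ∈ List.Ico a (Ebnd P n i) → childList P n l = [] →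
          [(false,l),(true,l)] <:+:
            bptL (((List.Ico a (Ebnd P n i)).filter (fun j => decide (P j = i))).map
              (buildTree P n fuel))) := by
      intro d
      induction d with
      | zero =>
        intro a hd ha1 ha2 _
        have heq : a = Ebnd P n i := by omega
        rw [← heq, List.Ico.self_empty]
        simp
      | succ d IHd =>
        intro a hd ha1 ha2 hcases
        rcases eq_or_lt_of_le ha2 with heq | haE
        · rw [heq, List.Ico.self_empty]; simp
        · have hPa : P a = i := by
            rcases hcases with h | h
            · omega
            · exact h
          have hmid := Ebnd_mid (P := P) (n := n) ha1 haE
          have han : a ≤ n := hmid.1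
          have hEa1 : a < Ebnd P n a := (Ebnd_spec P n a).1
          have hEaE : Ebnd P n a ≤ Ebnd P n i := by
            apply Ebnd_min haE
            rcases (Ebnd_spec P n i).2 with h | h
            · exact Or.inl h
            · exact Or.inr (by omega)
          have hstep : Ebnd P n a = Ebnd P n i ∨ P (Ebnd P n a) = i := by
            rcases eq_or_lt_of_le hEaE with h | h
            · exact Or.inl h
            · right
              have hmid2 := Ebnd_mid (P := P) (n := n) (lt_trans ha1 hEa1) h
              rcases (Ebnd_spec P n a).2 with h2 | h2
              · omega
              · rcases eq_or_lt_of_le hmid2.2 with he | he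
                · omega
                · exfalso
                  have := hP2 (Ebnd P n a) a (by omega) hmid2.1 h2 hEa1
                  omega
          have hfilter : (List.Ico a (Ebnd P n i)).filter (fun j => decide (P j = i)) =
              a :: (List.Ico (Ebnd P n a) (Ebnd P n i)).filter (fun j => decide (P j = i)) := by
            rw [Ico_cons haE, ← List.Ico.append_consecutive (by omega : a + 1 ≤ Ebnd P n a) hEaE]
            have hnil : (List.Ico (a+1) (Ebnd P n a)).filter (fun j => decide (P j = i)) = [] := by
              rw [List.filter_eq_nil_iff]
              intro x hx
              rw [List.Ico.mem] at hx
              have := Ebnd_mid (P := P) (n := n) (show a < x by omega) hx.2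
              simp only [decide_eq_true_eq]
              omega
            rw [List.filter_cons, List.filter_append, hnil]
            simp [hPa]
          rw [hfilter]
          simp only [List.map_cons, bptL_cons, opens_append]
          obtain ⟨ih1, ih2⟩ := IH a han (by omega)
          obtain ⟨jh1, jh2⟩ := IHd (Ebnd P n a) (by omega) (by omega) hEaE hstep
          constructor
          · rw [ih1, jh1, List.Ico.append_consecutive (le_of_lt hEa1) hEaE]
          · intro l hl hleaf
            rw [List.Ico.mem] at hl
            by_cases hlE : l < Ebnd P n a
            · exact inf_l _ (ih2 l (List.Ico.mem.mpr ⟨hl.1, hlE⟩) hleaf)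
            · exact inf_r _ (jh2 l (List.Ico.mem.mpr ⟨by omega, hl.2⟩) hleaf)
    have hchild := childList_eq hP1 hP2 hi
    have hstart : i + 1 = Ebnd P n i ∨ P (i+1) = i := by
      rcases eq_or_lt_of_le (show i + 1 ≤ Ebnd P n i from hE1) with h | h
      · exact Or.inl h
      · right
        have hmid := Ebnd_mid (P := P) (n := n) (show i < i + 1 by omega) h
        have := hP1 (i+1) (by omega) hmid.1
        omega
    obtain ⟨in1, in2⟩ := inner (Ebnd P n i - (i+1)) (i+1) le_rfl (Nat.lt_succ_self i) hE1 hstart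
    rw [buildTree_succ, bpt_node, hchild]
    constructor
    · simp only [opens_cons_false, opens_append]
      rw [in1]
      have h2 : opens [(true, i)] = [] := rfl
      rw [h2, List.append_nil, ← Ico_cons hE1]
    · intro l hl hleaf
      rw [List.Ico.mem] at hl
      rcases eq_or_lt_of_le hl.1 with heq | hlt
      · rw [← heq] at hleaf
        have h0 : (List.Ico (i+1) (Ebnd P n i)).filter (fun j => decide (P j = i)) = [] := by
          rw [← hchild]; exact hleaf
        rw [← heq, h0]
        simp only [List.map_nil, bptL_nil, List.nil_append]
        exact List.infix_refl _
      · exact (in2 l (List.Ico.mem.mpr ⟨by omega, hl.2⟩) hleaf).trans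
          ⟨[(false,i)], [(true,i)], rfl⟩

end Tree2


/-! ### balance lemmas -/

lemma bal_bptL (ts : List LTree)
    (h : ∀ t ∈ ts, ∀ k, (List.take k (bpt t)).countP (fun x => x.1) ≤
      (List.take k (bpt t)).countP (fun x => !x.1)) :
    ∀ k, (List.take k (bptL ts)).countP (fun x => x.1) ≤
      (List.take k (bptL ts)).countP (fun x => !x.1) := by
  induction ts with
  | nil => intro k; simp
  | cons t ts ih =>
    intro k
    rw [bptL_cons, List.take_append, List.countP_append, List.countP_append]
    exact Nat.add_le_add (h t (by simp) k) (ih (fun t ht => h t (by simp [ht])) _)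

lemma bal_buildTree (P : ℕ → ℕ) (n : ℕ) : ∀ fuel i k,
    (List.take k (bpt (buildTree P n fuel i))).countP (fun x => x.1) ≤
    (List.take k (bpt (buildTree P n fuel i))).countP (fun x => !x.1) := by
  intro fuel
  induction fuel with
  | zero =>
    intro i k
    have hb : bpt (buildTree P n 0 i) = [(false,i),(true,i)] := by
      show bpt (.node i []) = _
      rw [bpt_node, bptL_nil]
      rfl
    rw [hb]
    match k with
    | 0 => simp
    | 1 => simp
    | (k+2) =>
      rw [List.take_of_length_le (by simp)]
      simp
  | succ fuel ihf =>
    intro i k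
    rw [buildTree_succ, bpt_node]
    match k with
    | 0 => simp
    | (k+1) =>
      rw [List.cons_append, List.take_succ_cons, List.countP_cons, List.countP_cons]
      have hbal := bal_bptL ((childList P n i).map (buildTree P n fuel)) (by
        intro t ht k'
        rcases List.mem_map.1 ht with ⟨c, _, rfl⟩
        exact ihf c k')
      rw [List.take_append, List.countP_append, List.countP_append]
      have h1 := hbal k
      have h2 : (List.take (k - (bptL ((childList P n i).map (buildTree P n fuel))).length)
          [((true : Bool), i)]).countP (fun x => x.1) ≤ 1 := by
        calc _ ≤ (List.take (k - (bptL ((childList P n i).map (buildTree P n fuel))).length)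
            [((true : Bool), i)]).length := List.countP_le_length
        _ ≤ 1 := by rw [List.length_take]; simp
      have hd : (if ((false, i).1 : Bool) = true then (1:ℕ) else 0) = 0 := rfl
      have hf : (if (!(false, i).1) = true then (1:ℕ) else 0) = 1 := rfl
      omega

/-! ### onesBetween arithmetic -/

lemma map_getD_Ico (B : List Bool) (a v : ℕ) :
    (List.Ico a (min v B.length)).map (fun p => B.getD p false) = (B.take v).drop a := by
  apply List.ext_getElem
  · simp [List.Ico.length, List.length_take, List.length_drop]
  · intro k h1 h2
    rw [List.getElem_map]
    have hlen : (List.Ico a (min v B.length)).length = min v B.length - a := List.Ico.length _ _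
    have hk : a + k < min v B.length := by
      rw [List.length_map, hlen] at h1
      omega
    have hico : (List.Ico a (min v B.length))[k] = a + k := by
      show (List.range' a (min v B.length - a))[k]'(by
        rw [List.length_range']; rw [List.length_map, hlen] at h1; omega) = a + k
      rw [List.getElem_range']
      omega
    rw [hico, List.getElem_drop, List.getElem_take,
      List.getD_eq_getElem _ _ (by omega)]

lemma countP_take_split (B : List Bool) (p : Bool → Bool) {a v : ℕ} (hav : a ≤ v) :
    (B.take v).countP p = (B.take a).countP p + ((B.take v).drop a).countP p := by
  conv_lhs => rw [← List.take_append_drop a (B.take v)]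
  rw [List.countP_append, List.take_take, min_eq_left hav]

lemma onesBetween_eq {B : List Bool} {u v : ℕ} (huv : u + 1 ≤ v) :
    (B.take (u+1)).countP (fun b => b) + onesBetween B (u+1) (v+1) =
      (B.take v).countP (fun b => b) := by
  have hpred : ∀ p : ℕ, (decide (u + 1 < p + 1 ∧ p + 1 < v + 1) && B.getD p false)
      = ((decide (u + 1 ≤ p) && decide (p < v)) && B.getD p false) := by
    intro p
    by_cases h1 : u + 1 ≤ p <;> by_cases h2 : p < v <;>
      simp [h1, h2] <;> try omega
  have hA : List.filter (fun a => decide (u + 1 ≤ a)) (List.range B.length)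
      = List.Ico (u+1) B.length := by
    rw [← List.Ico.zero_bot, List.Ico.filter_le]
    congr 1
    try omega
  have hB : List.filter (fun a => decide (a < v)) (List.Ico (u+1) B.length)
      = List.Ico (u+1) (min B.length v) := List.Ico.filter_lt _ _ _
  have hC : List.filter (fun p => (decide (u + 1 ≤ p) && decide (p < v)) && B.getD p false)
        (List.range B.length)
      = List.filter (fun p => B.getD p false) (List.Ico (u+1) (min B.length v)) := by
    rw [← hB, ← hA, List.filter_filter, List.filter_filter]
    apply List.filter_congr
    intro x _
    cases hgd : B.getD x false <;> by_cases hx1 : u + 1 ≤ x <;> by_cases hx2 : x < v <;>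
      simp [hx1, hx2, hgd]
  have h1 : onesBetween B (u+1) (v+1) = ((B.take v).drop (u+1)).countP (fun b => b) := by
    rw [onesBetween]
    rw [List.filter_congr (fun p _ => hpred p)]
    rw [hC]
    rw [min_comm, ← map_getD_Ico B (u+1) v, ← List.countP_eq_length_filter]
    rw [List.countP_map]
    rfl
  rw [h1, ← countP_take_split B _ huv]

lemma ob_pos {B : List Bool} {u v p : ℕ} (h1 : u < p+1) (h2 : p+1 < v)
    (h3 : p < B.length) (h4 : B.getD p false = true) : 1 ≤ onesBetween B u v := by
  rw [List.getD_eq_getElem _ _ h3] at h4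
  have hp : p ∈ (List.range B.length).filter
      (fun p => decide (u < p + 1 ∧ p + 1 < v) && B.getD p false) := by
    refine List.mem_filter.2 ⟨List.mem_range.2 h3, ?_⟩
    simp only [decide_eq_true_eq, Bool.and_eq_true]
    refine ⟨by simp [h1, h2], ?_⟩
    rw [List.getD_eq_getElem _ _ h3, h4]
  exact List.length_pos_of_mem hp

lemma countP_take_mono {α} (p : α → Bool) (l : List α) {a b : ℕ} (hab : a ≤ b) :
    (l.take a).countP p ≤ (l.take b).countP p := by
  conv_rhs => rw [← List.take_append_drop a (l.take b)]
  rw [List.countP_append, List.take_take, min_eq_left hab]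
  omega


lemma indexOf_concat {α} [BEq α] [LawfulBEq α] {a : α} {s : List α} (t : List α) (h : a ∉ s) :
    (s ++ a :: t).idxOf a = s.length := by
  induction s with
  | nil => simp [List.idxOf_cons]
  | cons x s ih =>
    have hx : (x == a) = false := beq_eq_false_iff_ne.2 (fun e => h (by simp [e]))
    rw [List.cons_append, List.idxOf_cons, hx]
    simp only [List.length_cons, cond_false]
    rw [ih (fun hm => h (List.mem_cons_of_mem _ hm))]

lemma mem_opens_of_false {M : List (Bool × ℕ)} {i : ℕ} (h : (false, i) ∈ M) :
    i ∈ opens M :=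
  List.mem_filterMap.2 ⟨(false, i), h, rfl⟩

section Pos

variable {L : List (Bool × ℕ)} {n : ℕ} (hL : opens L = List.range (n+1))

include hL

lemma mem_false {i : ℕ} (hi : i ≤ n) : (false, i) ∈ L := by
  have hmem : i ∈ opens L := by
    rw [hL, List.mem_range]
    omega
  rcases List.mem_filterMap.1 hmem with ⟨⟨b, m⟩, hm, hsome⟩
  cases b
  · obtain rfl : m = i := by simpa using hsome
    exact hm
  · simp [opens] at hsome

lemma decomp {i : ℕ} (hi : i ≤ n) :
    ∃ s t : List (Bool × ℕ), L = s ++ (false, i) :: t ∧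
      L.idxOf (false, i) = s.length ∧ opens s = List.range i := by
  obtain ⟨s, t, hst⟩ := List.append_of_mem (mem_false hL hi)
  have hLo : opens s ++ i :: opens t = List.range (n+1) := by
    rw [← hL, hst, opens_append, opens_cons_false]
  have hnodup : (opens s ++ i :: opens t).Nodup := by
    rw [hLo]; exact List.nodup_range
  have hno : i ∉ opens s := fun hm =>
    (List.disjoint_of_nodup_append hnodup) hm (by simp)
  have hnotmem : (false, i) ∉ s := fun hm => hno (mem_opens_of_false hm)
  have hplen : (opens s).length < n + 1 := by
    have := congrArg List.length hLo
    simp only [List.length_append, List.length_cons, List.length_range] at this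
    omega
  have e1 : (opens s ++ i :: opens t)[(opens s).length]'(by simp) = i := by
    rw [List.getElem_append_right le_rfl]
    simp
  rw [List.getElem_of_eq hLo, List.getElem_range] at e1
  refine ⟨s, t, hst, ?_, ?_⟩
  · rw [hst, indexOf_concat _ hnotmem]
  · have hpre : opens s = List.take (opens s).length (List.range (n+1)) := by
      rw [← hLo, List.take_left]
    rw [List.take_range, e1, min_eq_left (by omega)] at hpre
    exact hpre

lemma idx_lt {i : ℕ} (hi : i ≤ n) : L.idxOf (false, i) < L.length := by
  obtain ⟨s, t, hst, hidx, _⟩ := decomp hL hi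
  rw [hidx, hst]
  simp

lemma getElem_idx {i : ℕ} (hi : i ≤ n) :
    L[L.idxOf (false, i)]'(idx_lt hL hi) = (false, i) := by
  obtain ⟨s, t, hst, hidx, _⟩ := decomp hL hi
  subst hst
  simp only [hidx]
  rw [List.getElem_append_right le_rfl]
  simp

lemma countF_take_idx {i : ℕ} (hi : i ≤ n) :
    (L.take (L.idxOf (false, i))).countP (fun x => !x.1) = i := by
  obtain ⟨s, t, hst, hidx, hos⟩ := decomp hL hi
  subst hst
  rw [hidx, List.take_left]
  have := congrArg List.length hos
  rw [List.length_range, length_opens] at this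
  omega

lemma idx_mono {i j : ℕ} (hij : i < j) (hj : j ≤ n) :
    L.idxOf (false, i) < L.idxOf (false, j) := by
  by_contra hc
  push_neg at hc
  have h1 := countF_take_idx hL (le_of_lt (lt_of_lt_of_le hij hj))
  have h2 := countF_take_idx hL hj
  have := countP_take_mono (fun x : Bool × ℕ => !x.1) L hc
  omega

lemma next_true_of_infix {i : ℕ} (hi : i ≤ n)
    (hinf : [(false, i), (true, i)] <:+: L) :
    L.idxOf (false, i) + 1 < L.length ∧
      L[L.idxOf (false, i) + 1]? = some (true, i) := by
  obtain ⟨s, t, hst⟩ := hinf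
  have hst' : L = s ++ (false, i) :: (true, i) :: t := by
    rw [← hst]; simp
  have hLo : opens s ++ i :: opens ((true,i) :: t) = List.range (n+1) := by
    rw [← hL, hst', opens_append, opens_cons_false]
  have hnodup : (opens s ++ i :: opens ((true,i) :: t)).Nodup := by
    rw [hLo]; exact List.nodup_range
  have hno : i ∉ opens s := fun hm =>
    (List.disjoint_of_nodup_append hnodup) hm (by simp)
  have hnotmem : (false, i) ∉ s := fun hm => hno (mem_opens_of_false hm)
  have hidx : L.idxOf (false, i) = s.length := by
    rw [hst', indexOf_concat _ hnotmem]
  have hlen : L.length = s.length + 2 + t.length := by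
    rw [hst']; simp; omega
  refine ⟨by omega, ?_⟩
  rw [hidx, hst', List.getElem?_append_right (by omega)]
  have h1 : s.length + 1 - s.length = 1 := by omega
  rw [h1]
  simp

end Pos



/-! ### root-level lemmas -/

section Root

variable {P : ℕ → ℕ} {n : ℕ}
variable (hP1 : ∀ j, 1 ≤ j → j ≤ n → P j < j)
variable (hP2 : ∀ j m, 1 ≤ j → j ≤ n → P j < m → m < j → P j ≤ P m)

include hP1 hP2

lemma opens_root : opens (bpt (buildTree P n (n+1) 0)) = List.range (n+1) := by
  have h := (main_struct hP1 hP2 (n+1) 0 (Nat.zero_le n) (by omega)).1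
  rw [h, Ebnd_zero, List.Ico.zero_bot]

lemma leaf_infix {i : ℕ} (hi : i ≤ n) (hleaf : childList P n i = []) :
    [(false, i), (true, i)] <:+: bpt (buildTree P n (n+1) 0) := by
  have h := (main_struct hP1 hP2 (n+1) 0 (Nat.zero_le n) (by omega)).2
  exact h i (by rw [Ebnd_zero]; exact List.Ico.mem.2 ⟨Nat.zero_le _, by omega⟩) hleaf

omit hP1 hP2

lemma ct_idx (hn : 1 ≤ n)
    (hL : opens (bpt (buildTree P n (n+1) 0)) = List.range (n+1)) :
    ((bpt (buildTree P n (n+1) 0)).take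
        ((bpt (buildTree P n (n+1) 0)).idxOf (false, n))).countP (fun x => x.1) + 1 ≤ n := by
  set L := bpt (buildTree P n (n+1) 0) with hLdef
  set M := bptL ((childList P n 0).map (buildTree P n n)) with hMdef
  have hshape : L = ((false, 0) :: M) ++ [(true, 0)] := by
    rw [hLdef, buildTree_succ, bpt_node, hMdef]
  set k := L.idxOf (false, n) with hkdef
  have hklt : k < L.length := idx_lt hL le_rfl
  have hget : L[k]? = some (false, n) := by
    rw [List.getElem?_eq_getElem hklt, getElem_idx hL le_rfl]
  have hcf : (L.take k).countP (fun x => !x.1) = n := countF_take_idx hL le_rfl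
  have hlen : L.length = M.length + 2 := by rw [hshape]; simp
  have hk1 : 1 ≤ k := by
    rcases Nat.eq_zero_or_pos k with h0 | h0
    · exfalso
      have h2 : L[0]? = some (false, 0) := by rw [hshape]; simp
      rw [← h0, hget] at h2
      simp at h2
      omega
    · exact h0
  have hkM : k ≤ M.length := by
    by_contra hc
    push_neg at hc
    have hk2 : k = M.length + 1 := by omega
    have h2 : L[k]? = some (true, 0) := by
      rw [hshape, hk2]
      rw [List.getElem?_append_right (by simp)]
      simp
    rw [hget] at h2
    simp at h2
  have htake : L.take k = (false, 0) :: M.take (k-1) := by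
    rw [hshape, List.take_append_of_le_length (by simp; omega)]
    conv_lhs => rw [show k = (k-1)+1 by omega]
    rw [List.take_succ_cons]
  have hbal : (M.take (k-1)).countP (fun x => x.1) ≤ (M.take (k-1)).countP (fun x => !x.1) := by
    apply bal_bptL
    intro t ht k'
    rcases List.mem_map.1 ht with ⟨c, _, rfl⟩
    exact bal_buildTree P n n c k'
  rw [htake] at hcf ⊢
  rw [List.countP_cons] at hcf ⊢
  simp only [show ((false, (0:ℕ)).1 : Bool) = false from rfl] at hcf ⊢
  norm_num at hcf ⊢
  omega

lemma ctB_bridge (L : List (Bool × ℕ)) (k : ℕ) :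
    ((List.map Prod.fst L).take k).countP (fun b => b) = (L.take k).countP (fun x => x.1) := by
  rw [← List.map_take, List.countP_map]
  rfl

include hP1 hP2

lemma tree_sum (hn : 1 ≤ n) :
    ∑ i ∈ Finset.Icc 1 (n-1), onesBetween (List.map Prod.fst (bpt (buildTree P n (n+1) 0)))
      ((bpt (buildTree P n (n+1) 0)).idxOf (false, i) + 1)
      ((bpt (buildTree P n (n+1) 0)).idxOf (false, i+1) + 1) ≤ n - 1 := by
  set L := bpt (buildTree P n (n+1) 0) with hLdef
  set B := List.map Prod.fst L with hBdef
  have hL : opens L = List.range (n+1) := opens_root hP1 hP2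
  have key : ∀ j, j ≤ n - 1 →
      (∑ i ∈ Finset.Icc 1 j, onesBetween B (L.idxOf (false, i) + 1) (L.idxOf (false, i+1) + 1))
        + (B.take (L.idxOf (false, 1))).countP (fun b => b)
      ≤ (B.take (L.idxOf (false, j+1))).countP (fun b => b) := by
    intro j
    induction j with
    | zero => intro _; simp
    | succ j ihj =>
      intro hj
      rw [Finset.sum_Icc_succ_top (by omega)]
      have hmono : L.idxOf (false, j+1) + 1 ≤ L.idxOf (false, j+1+1) := by
        have := idx_mono hL (show j+1 < j+1+1 by omega) (by omega)
        omega
      have hstep := onesBetween_eq (B := B) (u := L.idxOf (false, j+1))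
        (v := L.idxOf (false, j+1+1)) hmono
      have hmono2 := countP_take_mono (fun b : Bool => b) B
        (show L.idxOf (false, j+1) ≤ L.idxOf (false, j+1) + 1 by omega)
      have hih := ihj (by omega)
      omega
  have hfin := key (n-1) le_rfl
  have hn1 : n - 1 + 1 = n := by omega
  rw [hn1] at hfin
  have hct := ct_idx (P := P) hn hL
  rw [← hLdef] at hct
  have hbr := ctB_bridge L (L.idxOf (false, n))
  have hbr2 := ctB_bridge L (L.idxOf (false, 1))
  rw [← hBdef] at hbr hbr2
  omega

lemma tree_pos (hn : 1 ≤ n) {i : ℕ} (h1 : 1 ≤ i) (h2 : i ≤ n - 1)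
    (hleaf : childList P n i = []) :
    1 ≤ onesBetween (List.map Prod.fst (bpt (buildTree P n (n+1) 0)))
      ((bpt (buildTree P n (n+1) 0)).idxOf (false, i) + 1)
      ((bpt (buildTree P n (n+1) 0)).idxOf (false, i+1) + 1) := by
  set L := bpt (buildTree P n (n+1) 0) with hLdef
  have hL : opens L = List.range (n+1) := opens_root hP1 hP2
  obtain ⟨hlt, hget⟩ := next_true_of_infix hL (by omega) (leaf_infix hP1 hP2 (by omega) hleaf)
  have hmono := idx_mono hL (show i < i+1 by omega) (by omega)
  have hne : L.idxOf (false, i+1) ≠ L.idxOf (false, i) + 1 := by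
    intro heq
    have hg2 : L[L.idxOf (false, i+1)]? = some (false, i+1) := by
      rw [List.getElem?_eq_getElem (idx_lt hL (by omega))]
      rw [getElem_idx hL (by omega)]
    rw [heq, hget] at hg2
    simp at hg2
  have hgetE : L[L.idxOf (false, i) + 1]'hlt = (true, i) := by
    have := List.getElem?_eq_getElem hlt
    rw [hget] at this
    exact (Option.some_inj.1 this).symm
  apply ob_pos (p := L.idxOf (false, i) + 1) (by omega) (by omega)
    (by rw [List.length_map]; exact hlt)
  rw [List.getD_eq_getElem _ _ (by rw [List.length_map]; exact hlt)]
  rw [List.getElem_map]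
  rw [hgetE]

end Root


/-! ### psv / plv facts -/

lemma psv_lt (A : ℕ → ℤ) (j : ℕ) (hj : 1 ≤ j) : psv A j < j :=
  lt_of_le_of_lt (Nat.findGreatest_le (j-1)) (by omega)

lemma plv_lt (A : ℕ → ℤ) (j : ℕ) (hj : 1 ≤ j) : plv A j < j :=
  lt_of_le_of_lt (Nat.findGreatest_le (j-1)) (by omega)

lemma psv_prop2 (A : ℕ → ℤ) (j m : ℕ) (hj : 1 ≤ j) (h3 : psv A j < m) (h4 : m < j) :
    psv A j ≤ psv A m := by
  rcases Nat.eq_zero_or_pos (psv A j) with h0 | h0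
  · omega
  · have hspec : A (psv A j) < A j := Nat.findGreatest_of_ne_zero (m := psv A j) rfl (by omega)
    have hle : psv A j ≤ j - 1 := Nat.findGreatest_le (j-1)
    have hge : ¬ (A m < A j) :=
      Nat.findGreatest_is_greatest (P := fun x => A x < A j) (n := j - 1) h3 (by omega)
    exact Nat.le_findGreatest (by omega) (lt_of_lt_of_le hspec (not_lt.1 hge))

lemma plv_prop2 (A : ℕ → ℤ) (j m : ℕ) (hj : 1 ≤ j) (h3 : plv A j < m) (h4 : m < j) :
    plv A j ≤ plv A m := by
  rcases Nat.eq_zero_or_pos (plv A j) with h0 | h0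
  · omega
  · have hspec : A j < A (plv A j) := Nat.findGreatest_of_ne_zero (m := plv A j) rfl (by omega)
    have hle : plv A j ≤ j - 1 := Nat.findGreatest_le (j-1)
    have hge : ¬ (A j < A m) :=
      Nat.findGreatest_is_greatest (P := fun x => A j < A x) (n := j - 1) h3 (by omega)
    exact Nat.le_findGreatest (by omega) (lt_of_le_of_lt (not_lt.1 hge) hspec)

lemma not_both {A : ℕ → ℤ} {n i : ℕ} (hi : 1 ≤ i)
    (h1 : internalMin A n i) (h2 : internalMax A n i) : False := by
  obtain ⟨j, hj1, hj2, hj3⟩ := h1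
  obtain ⟨k, hk1, hk2, hk3⟩ := h2
  have hij : i ≤ j - 1 := by rw [← hj3]; exact Nat.findGreatest_le (j-1)
  have hik : i ≤ k - 1 := by rw [← hk3]; exact Nat.findGreatest_le (k-1)
  have hAij : A i < A j := Nat.findGreatest_of_ne_zero hj3 (by omega)
  have hAik : A i < A i := by
    have hAk : A k < A i := by
      have := Nat.findGreatest_of_ne_zero hk3 (by omega)
      exact this
    have h5 : A i < A (i+1) := by
      rcases eq_or_lt_of_le (show i + 1 ≤ j by omega) with heq | hlt
      · rw [heq]; exact hAij
      · have hg : ¬ (A (i+1) < A j) :=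
          Nat.findGreatest_is_greatest (P := fun x => A x < A j) (n := j - 1)
            (show psv A j < i + 1 by omega) (by omega)
        exact lt_of_lt_of_le hAij (not_lt.1 hg)
    have h6 : A (i+1) < A i := by
      rcases eq_or_lt_of_le (show i + 1 ≤ k by omega) with heq | hlt
      · rw [heq]; exact hAk
      · have hg : ¬ (A k < A (i+1)) :=
          Nat.findGreatest_is_greatest (P := fun x => A k < A x) (n := k - 1)
            (show plv A k < i + 1 by omega) (by omega)
        exact lt_of_le_of_lt (not_lt.1 hg) hAk
    exact lt_trans h5 h6
  exact absurd hAik (lt_irrefl _)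

lemma childList_psv_nil {A : ℕ → ℤ} {n i : ℕ} (h : ¬ internalMin A n i) :
    childList (psv A) n i = [] := by
  rw [childList, List.filter_eq_nil_iff]
  intro a ha hdec
  rw [List.mem_range] at ha
  simp only [decide_eq_true_eq] at hdec
  exact h ⟨a, hdec.1, by omega, hdec.2.1⟩

lemma childList_plv_nil {A : ℕ → ℤ} {n i : ℕ} (h : ¬ internalMax A n i) :
    childList (plv A) n i = [] := by
  rw [childList, List.filter_eq_nil_iff]
  intro a ha hdec
  rw [List.mem_range] at ha
  simp only [decide_eq_true_eq] at hdec
  exact h ⟨a, hdec.1, by omega, hdec.2.1⟩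

end BPaux

open scoped Classical in
/-- `kval A n i` is the number of `1`s strictly between `f(i,T)` and `f(i+1,T)` in `BP(T)`,
where `T` is the tree (among `Min(A)`, `Max(A)`) that is NOT the relevant tree of node `i`. -/
noncomputable def kval (A : ℕ → ℤ) (n i : ℕ) : ℕ :=
  if internalMin A n i then
    onesBetween (bpSeq (maxTree A n)) (fpos (maxTree A n) i) (fpos (maxTree A n) (i + 1))
  else
    onesBetween (bpSeq (minTree A n)) (fpos (minTree A n) i) (fpos (minTree A n) (i + 1))

theorem stmt7 (A : ℕ → ℤ) (n : ℕ) (h : NoConsecEq A n) (hn : 1 ≤ n) :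
    (∀ i, 1 ≤ i → i ≤ n - 1 → 1 ≤ kval A n i) ∧
    (∑ i ∈ Finset.Icc 1 (n - 1), kval A n i) ≤ 2 * (n - 1) ∧
    (∑ i ∈ Finset.Icc 1 (n - 1), (kval A n i - 1)) ≤ n - 1 := by
  classical
  have hP1min : ∀ j, 1 ≤ j → j ≤ n → psv A j < j := fun j hj _ => BPaux.psv_lt A j hj
  have hP2min : ∀ j m, 1 ≤ j → j ≤ n → psv A j < m → m < j → psv A j ≤ psv A m :=
    fun j m h1 _ h3 h4 => BPaux.psv_prop2 A j m h1 h3 h4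
  have hP1max : ∀ j, 1 ≤ j → j ≤ n → plv A j < j := fun j hj _ => BPaux.plv_lt A j hj
  have hP2max : ∀ j m, 1 ≤ j → j ≤ n → plv A j < m → m < j → plv A j ≤ plv A m :=
    fun j m h1 _ h3 h4 => BPaux.plv_prop2 A j m h1 h3 h4
  have hpos : ∀ i, 1 ≤ i → i ≤ n - 1 → 1 ≤ kval A n i := by
    intro i h1 h2
    rw [kval]
    by_cases hint : internalMin A n i
    · rw [if_pos hint]
      have hleaf : childList (plv A) n i = [] :=
        BPaux.childList_plv_nil (fun hmax => BPaux.not_both h1 hint hmax)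
      exact BPaux.tree_pos hP1max hP2max hn h1 h2 hleaf
    · rw [if_neg hint]
      exact BPaux.tree_pos hP1min hP2min hn h1 h2 (BPaux.childList_psv_nil hint)
  have hsum : (∑ i ∈ Finset.Icc 1 (n - 1), kval A n i) ≤ 2 * (n - 1) := by
    have hb : ∀ i ∈ Finset.Icc 1 (n-1), kval A n i ≤
        onesBetween (bpSeq (minTree A n)) (fpos (minTree A n) i) (fpos (minTree A n) (i+1)) +
        onesBetween (bpSeq (maxTree A n)) (fpos (maxTree A n) i) (fpos (maxTree A n) (i+1)) := by
      intro i _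
      rw [kval]
      by_cases hI : internalMin A n i
      · rw [if_pos hI]; exact Nat.le_add_left _ _
      · rw [if_neg hI]; exact Nat.le_add_right _ _
    have hmin : (∑ i ∈ Finset.Icc 1 (n-1), onesBetween (bpSeq (minTree A n))
        (fpos (minTree A n) i) (fpos (minTree A n) (i+1))) ≤ n - 1 :=
      BPaux.tree_sum hP1min hP2min hn
    have hmax : (∑ i ∈ Finset.Icc 1 (n-1), onesBetween (bpSeq (maxTree A n))
        (fpos (maxTree A n) i) (fpos (maxTree A n) (i+1))) ≤ n - 1 :=
      BPaux.tree_sum hP1max hP2max hn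
    calc (∑ i ∈ Finset.Icc 1 (n-1), kval A n i)
        ≤ ∑ i ∈ Finset.Icc 1 (n-1),
            (onesBetween (bpSeq (minTree A n)) (fpos (minTree A n) i) (fpos (minTree A n) (i+1)) +
             onesBetween (bpSeq (maxTree A n)) (fpos (maxTree A n) i) (fpos (maxTree A n) (i+1))) :=
          Finset.sum_le_sum hb
      _ = (∑ i ∈ Finset.Icc 1 (n-1), onesBetween (bpSeq (minTree A n))
            (fpos (minTree A n) i) (fpos (minTree A n) (i+1))) +
          (∑ i ∈ Finset.Icc 1 (n-1), onesBetween (bpSeq (maxTree A n))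
            (fpos (maxTree A n) i) (fpos (maxTree A n) (i+1))) := Finset.sum_add_distrib
      _ ≤ (n-1) + (n-1) := Nat.add_le_add hmin hmax
      _ = 2 * (n-1) := by omega
  refine ⟨hpos, hsum, ?_⟩
  have hcong : (∑ i ∈ Finset.Icc 1 (n-1), (kval A n i - 1 + 1)) =
      ∑ i ∈ Finset.Icc 1 (n-1), kval A n i := by
    apply Finset.sum_congr rfl
    intro i hi
    rw [Finset.mem_Icc] at hi
    have := hpos i hi.1 hi.2
    omega
  rw [Finset.sum_add_distrib, Finset.sum_const, smul_eq_mul, mul_one, Nat.card_Icc] at hcong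
  omega
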